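/- arXiv:2309.02013 — 2 statements merged into one kernel-verified Lean document; each statement's English description precedes it below -/
import Mathlib

section
/- Let $\mu$ be a Borel probability measure on $\mathbb{R}^d$, and for $x\in\mathbb{R}^d$ let $F_{\mu,x}(t)=\mu(\{z : \langle z,x\rangle\le t\})$. Then for every $x,y\in\mathbb{R}^d$, every $t\in\mathbb{R}$, every $\xi>0$, and any other Borel probability measure $\nu$ on $\mathbb{R}^d$ with marginal distribution functions $F_{\nu,x}$: $|F_{\mu,x}(t)-F_{\nu,x}(t)| \le \sup_{t'\in[t-\xi,t+\xi]}|F_{\mu,y}(t')-F_{\nu,y}(t')| + \mu(\{z : |\langle z,x\rangle-\langle z,y\rangle|\ge\xi\}) + (F_{\nu,x}(t+\xi)-F_{\nu,x}(t-\xi))$, provided $F_{\nu,y}=F_{\nu,x}$ (i.e. the marginals of $\nu$ in directions $x$ and $y$ coincide, as for the standard gaussian with $x,y\in S^{d-1}$). -/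
open MeasureTheory

lemma stmt1_aux {α : Type*} [MeasurableSpace α] (μ : Measure α) [IsProbabilityMeasure μ]
    {A B E : Set α} (h : A ⊆ B ∪ E) :
    (μ A).toReal ≤ (μ B).toReal + (μ E).toReal := by
  have h1 : μ A ≤ μ B + μ E := (measure_mono h).trans (measure_union_le B E)
  have h2 := ENNReal.toReal_mono
    (ENNReal.add_ne_top.mpr ⟨measure_ne_top μ B, measure_ne_top μ E⟩) h1
  rwa [ENNReal.toReal_add (measure_ne_top μ B) (measure_ne_top μ E)] at h2

lemma stmt1_le_one {α : Type*} [MeasurableSpace α] (μ : Measure α) [IsProbabilityMeasure μ] (s : Set α) :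
    (μ s).toReal ≤ 1 := by
  have := ENNReal.toReal_mono ENNReal.one_ne_top (prob_le_one (μ := μ) (s := s))
  simpa using this

/-- Lemma 2.2: continuity of `x ↦ |F_{μ,x}(t) - F_{ν,x}(t)|`. -/
theorem stmt1 (d : ℕ) (μ ν : Measure (EuclideanSpace ℝ (Fin d)))
    [IsProbabilityMeasure μ] [IsProbabilityMeasure ν]
    (x y : EuclideanSpace ℝ (Fin d)) (t ξ : ℝ) (hξ : 0 < ξ)
    -- the marginals of `ν` in directions `x` and `y` coincide:
    (hmarg : ∀ s : ℝ, ν {z | (inner ℝ z y : ℝ) ≤ s} = ν {z | (inner ℝ z x : ℝ) ≤ s}) :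
    |(μ {z | (inner ℝ z x : ℝ) ≤ t}).toReal - (ν {z | (inner ℝ z x : ℝ) ≤ t}).toReal| ≤
      sSup ((fun t' : ℝ => |(μ {z | (inner ℝ z y : ℝ) ≤ t'}).toReal -
          (ν {z | (inner ℝ z y : ℝ) ≤ t'}).toReal|) '' Set.Icc (t - ξ) (t + ξ)) +
      (μ {z | ξ ≤ |(inner ℝ z x : ℝ) - (inner ℝ z y : ℝ)|}).toReal +
      ((ν {z | (inner ℝ z x : ℝ) ≤ t + ξ}).toReal -
        (ν {z | (inner ℝ z x : ℝ) ≤ t - ξ}).toReal) := by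
  set f : ℝ → ℝ := fun t' : ℝ => |(μ {z | (inner ℝ z y : ℝ) ≤ t'}).toReal -
      (ν {z | (inner ℝ z y : ℝ) ≤ t'}).toReal| with hf
  have hbdd : BddAbove (f '' Set.Icc (t - ξ) (t + ξ)) := by
    refine ⟨1, ?_⟩
    rintro v ⟨t', _, rfl⟩
    rw [hf]
    have h1 := stmt1_le_one μ {z | (inner ℝ z y : ℝ) ≤ t'}
    have h2 := stmt1_le_one ν {z | (inner ℝ z y : ℝ) ≤ t'}
    have h3 : (0:ℝ) ≤ (μ {z | (inner ℝ z y : ℝ) ≤ t'}).toReal := ENNReal.toReal_nonneg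
    have h4 : (0:ℝ) ≤ (ν {z | (inner ℝ z y : ℝ) ≤ t'}).toReal := ENNReal.toReal_nonneg
    rw [abs_sub_le_iff]
    constructor <;> linarith
  have hS1 : f (t + ξ) ≤ sSup (f '' Set.Icc (t - ξ) (t + ξ)) :=
    le_csSup hbdd ⟨t + ξ, ⟨by linarith, le_refl _⟩, rfl⟩
  have hS2 : f (t - ξ) ≤ sSup (f '' Set.Icc (t - ξ) (t + ξ)) :=
    le_csSup hbdd ⟨t - ξ, ⟨le_refl _, by linarith⟩, rfl⟩
  have hincl1 : {z : EuclideanSpace ℝ (Fin d) | (inner ℝ z x : ℝ) ≤ t} ⊆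
      {z | (inner ℝ z y : ℝ) ≤ t + ξ} ∪ {z | ξ ≤ |(inner ℝ z x : ℝ) - (inner ℝ z y : ℝ)|} := by
    intro z hz
    by_cases hE : ξ ≤ |(inner ℝ z x : ℝ) - (inner ℝ z y : ℝ)|
    · exact Or.inr hE
    · left
      push_neg at hE
      have := (abs_lt.mp hE).1
      simp only [Set.mem_setOf_eq] at hz ⊢
      linarith
  have hincl2 : {z : EuclideanSpace ℝ (Fin d) | (inner ℝ z y : ℝ) ≤ t - ξ} ⊆
      {z | (inner ℝ z x : ℝ) ≤ t} ∪ {z | ξ ≤ |(inner ℝ z x : ℝ) - (inner ℝ z y : ℝ)|} := by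
    intro z hz
    by_cases hE : ξ ≤ |(inner ℝ z x : ℝ) - (inner ℝ z y : ℝ)|
    · exact Or.inr hE
    · left
      push_neg at hE
      have := (abs_lt.mp hE).2
      simp only [Set.mem_setOf_eq] at hz ⊢
      linarith
  have h1 := stmt1_aux μ hincl1
  have h2 := stmt1_aux μ hincl2
  have hd1 : (ν {z | (inner ℝ z y : ℝ) ≤ t + ξ}).toReal =
      (ν {z | (inner ℝ z x : ℝ) ≤ t + ξ}).toReal := by rw [hmarg]
  have hd2 : (ν {z | (inner ℝ z y : ℝ) ≤ t - ξ}).toReal =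
      (ν {z | (inner ℝ z x : ℝ) ≤ t - ξ}).toReal := by rw [hmarg]
  have hmono1 : (ν {z | (inner ℝ z x : ℝ) ≤ t - ξ}).toReal ≤
      (ν {z | (inner ℝ z x : ℝ) ≤ t}).toReal :=
    ENNReal.toReal_mono (measure_ne_top _ _)
      (measure_mono (fun z hz => by
        simp only [Set.mem_setOf_eq] at hz ⊢; linarith))
  have hmono2 : (ν {z | (inner ℝ z x : ℝ) ≤ t}).toReal ≤
      (ν {z | (inner ℝ z x : ℝ) ≤ t + ξ}).toReal :=
    ENNReal.toReal_mono (measure_ne_top _ _)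
      (measure_mono (fun z hz => by
        simp only [Set.mem_setOf_eq] at hz ⊢; linarith))
  have ha1 : (μ {z | (inner ℝ z y : ℝ) ≤ t + ξ}).toReal -
      (ν {z | (inner ℝ z y : ℝ) ≤ t + ξ}).toReal ≤ f (t + ξ) := le_abs_self _
  have ha2 : (ν {z | (inner ℝ z y : ℝ) ≤ t - ξ}).toReal -
      (μ {z | (inner ℝ z y : ℝ) ≤ t - ξ}).toReal ≤ f (t - ξ) := by
    rw [hf]
    exact (le_abs_self _).trans (abs_sub_comm _ _).le
  rw [abs_sub_le_iff]
  constructor <;> linarith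
end

section
/- There exist absolute constants $c,C>0$ such that for every $t\in\mathbb{R}$ and every $\xi$ with $0\le \xi\le c/\sqrt{\log(1/\sigma^2(t))}$, one has $|F_g(t\pm\xi)-F_g(t)|\le C\,\xi\,\sigma^2(t)\sqrt{\log(1/\sigma^2(t))}$, where $F_g$ is the standard normal distribution function and $\sigma^2(t)=F_g(t)(1-F_g(t))$. -/
open MeasureTheory

/-- The standard normal distribution function. -/
noncomputable def Phi (t : ℝ) : ℝ := (ProbabilityTheory.gaussianReal 0 1 (Set.Iic t)).toReal

/-- `σ²(t) = F_g(t)(1 - F_g(t))`. -/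
noncomputable def sigma2 (t : ℝ) : ℝ := Phi t * (1 - Phi t)

noncomputable def gg (x : ℝ) : ℝ := (Real.sqrt (2 * Real.pi))⁻¹ * Real.exp (-x ^ 2 / 2)

lemma gg_eq (x : ℝ) : ProbabilityTheory.gaussianPDFReal 0 1 x = gg x := by
  simp [ProbabilityTheory.gaussianPDFReal, gg]

lemma gg_pos (x : ℝ) : 0 < gg x := by
  have h : 0 < Real.sqrt (2 * Real.pi) := Real.sqrt_pos.2 (by positivity)
  unfold gg
  positivity

lemma sqrt_two_pi_le : Real.sqrt (2 * Real.pi) ≤ 3 := by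
  have : (2 : ℝ) * Real.pi ≤ 9 := by nlinarith [Real.pi_lt_d2]
  calc Real.sqrt (2 * Real.pi) ≤ Real.sqrt 9 := Real.sqrt_le_sqrt this
  _ = 3 := by rw [show (9:ℝ) = 3^2 by norm_num, Real.sqrt_sq (by norm_num)]

lemma two_le_sqrt_two_pi : 2 ≤ Real.sqrt (2 * Real.pi) := by
  have : (4 : ℝ) ≤ 2 * Real.pi := by nlinarith [Real.pi_gt_three]
  calc (2:ℝ) = Real.sqrt 4 := by rw [show (4:ℝ) = 2^2 by norm_num, Real.sqrt_sq (by norm_num)]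
  _ ≤ Real.sqrt (2 * Real.pi) := Real.sqrt_le_sqrt this

lemma gg_le_half (x : ℝ) : gg x ≤ 1 / 2 := by
  have h1 : Real.exp (-x ^ 2 / 2) ≤ 1 := Real.exp_le_one_iff.2 (by nlinarith [sq_nonneg x])
  have h2 : (Real.sqrt (2 * Real.pi))⁻¹ ≤ 1 / 2 := by
    rw [inv_le_iff_one_le_mul₀ (by positivity)]
    nlinarith [two_le_sqrt_two_pi]
  have h3 : 0 < Real.sqrt (2 * Real.pi) := by positivity
  calc gg x ≤ (Real.sqrt (2 * Real.pi))⁻¹ * 1 := by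
        unfold gg; gcongr
  _ ≤ 1/2 := by rw [mul_one]; exact h2

lemma gg_ratio (x y : ℝ) : gg x = gg y * Real.exp ((y ^ 2 - x ^ 2) / 2) := by
  unfold gg
  rw [mul_assoc, ← Real.exp_add]
  ring_nf

lemma gg_mono {x y : ℝ} (h : x ^ 2 ≤ y ^ 2) : gg y ≤ gg x := by
  have h3 : 0 < Real.sqrt (2 * Real.pi) := by positivity
  unfold gg
  exact mul_le_mul_of_nonneg_left
    (Real.exp_le_exp.2 (show -y^2/2 ≤ -x^2/2 by linarith)) (by positivity)

lemma gg_eq_fun : (ProbabilityTheory.gaussianPDFReal 0 1) = gg := funext gg_eq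

lemma gg_integrable : Integrable gg := by
  rw [← gg_eq_fun]; exact ProbabilityTheory.integrable_gaussianPDFReal 0 1

lemma Phi_eq (t : ℝ) : Phi t = ∫ x in Set.Iic t, gg x := by
  rw [Phi, ProbabilityTheory.gaussianReal_apply_eq_integral 0 one_ne_zero,
    ENNReal.toReal_ofReal, gg_eq_fun]
  exact setIntegral_nonneg measurableSet_Iic
    fun x _ => ProbabilityTheory.gaussianPDFReal_nonneg 0 1 x

lemma Phi_sub {a b : ℝ} (h : a ≤ b) : Phi b - Phi a = ∫ x in a..b, gg x := by
  rw [Phi_eq, Phi_eq]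
  exact intervalIntegral.integral_Iic_sub_Iic gg_integrable.integrableOn gg_integrable.integrableOn

lemma Phi_sub_le {a b M : ℝ} (h : a ≤ b) (hM : ∀ x ∈ Set.Icc a b, gg x ≤ M) :
    Phi b - Phi a ≤ (b - a) * M := by
  rw [Phi_sub h]
  calc ∫ x in a..b, gg x ≤ ∫ _x in a..b, M := by
        apply intervalIntegral.integral_mono_on h gg_integrable.intervalIntegrable
          intervalIntegrable_const hM
  _ = (b - a) * M := by simp [smul_eq_mul, mul_comm]

lemma Phi_sub_ge {a b m : ℝ} (h : a ≤ b) (hm : ∀ x ∈ Set.Icc a b, m ≤ gg x) :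
    (b - a) * m ≤ Phi b - Phi a := by
  rw [Phi_sub h]
  calc ((b - a) * m : ℝ) = ∫ _x in a..b, m := by simp [smul_eq_mul, mul_comm]
  _ ≤ ∫ x in a..b, gg x := by
        apply intervalIntegral.integral_mono_on h intervalIntegrable_const
          gg_integrable.intervalIntegrable hm

lemma Phi_mono : Monotone Phi := by
  intro a b h
  have := Phi_sub_ge h (fun x _ => (gg_pos x).le)
  simpa using this

lemma Phi_nonneg (t : ℝ) : 0 ≤ Phi t := ENNReal.toReal_nonneg

lemma Phi_le_one (t : ℝ) : Phi t ≤ 1 := by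
  have h : (ProbabilityTheory.gaussianReal 0 1 (Set.Iic t)) ≤ 1 := prob_le_one
  calc Phi t ≤ (1 : ENNReal).toReal := ENNReal.toReal_mono ENNReal.one_ne_top h
  _ = 1 := by simp

lemma Phi_lt_succ (t : ℝ) : Phi t < Phi (t + 1) := by
  have hb : ∀ x ∈ Set.Icc t (t + 1), gg (|t| + 1) ≤ gg x := by
    intro x hx
    apply gg_mono
    have h1 : -(|t| + 1) ≤ x := by
      have := neg_abs_le t; linarith [hx.1]
    have h2 : x ≤ |t| + 1 := by
      have := le_abs_self t; linarith [hx.2]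
    nlinarith
  have := Phi_sub_ge (by linarith : t ≤ t + 1) hb
  have hg := gg_pos (|t| + 1)
  simp at this
  linarith

lemma Phi_pos (t : ℝ) : 0 < Phi t := by
  have h := Phi_lt_succ (t - 1)
  have h2 := Phi_nonneg (t - 1)
  have : t - 1 + 1 = t := by ring
  rw [this] at h
  linarith

lemma Phi_lt_one (t : ℝ) : Phi t < 1 :=
  lt_of_lt_of_le (Phi_lt_succ t) (Phi_le_one (t + 1))

lemma Phi_neg (t : ℝ) : Phi (-t) = 1 - Phi t := by
  set μ := ProbabilityTheory.gaussianReal 0 1 with hμ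
  have hmap : μ.map (fun x : ℝ => -x) = μ := by
    have h := ProbabilityTheory.gaussianReal_map_const_mul (μ := 0) (v := 1) (-1)
    have h2 : (NNReal.mk ((-1 : ℝ) ^ 2) (sq_nonneg _)) = 1 := by ext; norm_num
    rw [h2] at h
    simp only [neg_one_mul, mul_one, neg_zero] at h
    exact h
  have h1 : μ (Set.Iic (-t)) = μ (Set.Ici t) := by
    conv_lhs => rw [← hmap]
    rw [Measure.map_apply measurable_neg measurableSet_Iic]
    congr 1
    ext x
    simp
  have hsing : μ {t} = 0 :=
    ProbabilityTheory.gaussianReal_absolutelyContinuous 0 one_ne_zero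
      (measure_singleton t)
  have hIio : μ (Set.Iic t) = μ (Set.Iio t) := by
    apply le_antisymm
    · calc μ (Set.Iic t) = μ (Set.Iio t ∪ {t}) := by rw [Set.Iio_union_right]
      _ ≤ μ (Set.Iio t) + μ {t} := measure_union_le _ _
      _ = μ (Set.Iio t) := by rw [hsing, add_zero]
    · exact measure_mono Set.Iio_subset_Iic_self
  have h2 : μ (Set.Ici t) = 1 - μ (Set.Iio t) := by
    rw [← prob_compl_eq_one_sub measurableSet_Iio]
    congr 1
    ext x
    simp
  rw [Phi, Phi, ← hμ, h1, h2, ← hIio]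
  rw [ENNReal.toReal_sub_of_le prob_le_one ENNReal.one_ne_top, ENNReal.toReal_one]

lemma sigma2_pos (t : ℝ) : 0 < sigma2 t := by
  have h1 := Phi_pos t
  have h2 := Phi_lt_one t
  unfold sigma2
  nlinarith

lemma sigma2_le_quarter (t : ℝ) : sigma2 t ≤ 1 / 4 := by
  unfold sigma2
  nlinarith [sq_nonneg (Phi t - 1 / 2)]

lemma sigma2_neg (t : ℝ) : sigma2 (-t) = sigma2 t := by
  unfold sigma2
  rw [Phi_neg]
  ring

lemma one_le_log (t : ℝ) : 1 ≤ Real.log (1 / sigma2 t) := by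
  have h4 : (4 : ℝ) ≤ 1 / sigma2 t := by
    rw [le_div_iff₀ (sigma2_pos t)]
    linarith [sigma2_le_quarter t, mul_le_mul_of_nonneg_left (sigma2_le_quarter t) (by norm_num : (0:ℝ) ≤ 4)]
  have he : Real.exp 1 ≤ 4 := by
    have := Real.exp_one_lt_d9
    linarith
  calc (1 : ℝ) = Real.log (Real.exp 1) := (Real.log_exp 1).symm
  _ ≤ Real.log (1 / sigma2 t) := Real.log_le_log (Real.exp_pos 1) (le_trans he h4)

lemma one_le_sqrt_log (t : ℝ) : 1 ≤ Real.sqrt (Real.log (1 / sigma2 t)) := by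
  calc (1 : ℝ) = Real.sqrt 1 := Real.sqrt_one.symm
  _ ≤ _ := Real.sqrt_le_sqrt (one_le_log t)

lemma gg_hasDeriv (x : ℝ) : HasDerivAt gg (-x * gg x) x := by
  have h1 : HasDerivAt (fun s : ℝ => -s ^ 2 / 2) (-x) x := by
    have h := ((hasDerivAt_pow 2 x).neg).div_const 2
    refine h.congr_deriv ?_
    push_cast
    ring
  have h2 := (h1.exp).const_mul ((Real.sqrt (2 * Real.pi))⁻¹)
  have hval : (Real.sqrt (2 * Real.pi))⁻¹ * (Real.exp (-x ^ 2 / 2) * -x) = -x * gg x := by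
    unfold gg; ring
  rw [← hval]
  exact h2

lemma integrable_neg_mul_gg : Integrable (fun x : ℝ => -x * gg x) := by
  have h := (integrable_mul_exp_neg_mul_sq (by norm_num : (0 : ℝ) < 1 / 2)).const_mul
    (-(Real.sqrt (2 * Real.pi))⁻¹)
  have heq : (fun x : ℝ => -x * gg x)
      = fun x : ℝ => -(Real.sqrt (2 * Real.pi))⁻¹ * (x * Real.exp (-(1 / 2) * x ^ 2)) := by
    funext x
    have hx : -(1 / 2 : ℝ) * x ^ 2 = -x ^ 2 / 2 := by ring
    rw [hx]
    unfold gg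
    ring
  rw [heq]
  exact h

lemma gg_tendsto_atBot : Filter.Tendsto gg Filter.atBot (nhds 0) := by
  have h1 : Filter.Tendsto (fun x : ℝ => x ^ 2) Filter.atBot Filter.atTop := by
    have ha : Filter.Tendsto (fun x : ℝ => x ^ 2) Filter.atTop Filter.atTop :=
      Filter.tendsto_pow_atTop two_ne_zero
    have hb : Filter.Tendsto (fun x : ℝ => -x) Filter.atBot Filter.atTop :=
      Filter.tendsto_neg_atBot_atTop
    have h := ha.comp hb
    apply h.congr
    intro x
    simp
  have h2 : Filter.Tendsto (fun x : ℝ => -x ^ 2 / 2) Filter.atBot Filter.atBot := by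
    apply Filter.Tendsto.atBot_div_const (by norm_num : (0:ℝ) < 2)
    have hc : Filter.Tendsto (fun x : ℝ => -x) Filter.atTop Filter.atBot :=
      Filter.tendsto_neg_atTop_atBot
    exact hc.comp h1
  have h3 := Real.tendsto_exp_atBot.comp h2
  have h4 := h3.const_mul ((Real.sqrt (2 * Real.pi))⁻¹)
  rw [mul_zero] at h4
  exact h4

lemma integral_neg_mul_gg (b : ℝ) : (∫ x in Set.Iic b, -x * gg x) = gg b := by
  have h := integral_Iic_of_hasDerivAt_of_tendsto' (f := gg) (f' := fun x => -x * gg x)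
    (a := b) (m := 0) (fun x _ => gg_hasDeriv x) integrable_neg_mul_gg.integrableOn
    gg_tendsto_atBot
  simpa using h

lemma tail_le {t : ℝ} (ht : 1 ≤ t) : 1 - Phi t ≤ Real.exp (-t ^ 2 / 2) := by
  rw [← Phi_neg, Phi_eq]
  have hmono : ∀ x ∈ Set.Iic (-t), gg x ≤ -x * gg x := by
    intro x hx
    simp only [Set.mem_Iic] at hx
    nlinarith [gg_pos x]
  have hle : (∫ x in Set.Iic (-t), gg x) ≤ ∫ x in Set.Iic (-t), -x * gg x :=
    setIntegral_mono_on gg_integrable.integrableOn integrable_neg_mul_gg.integrableOn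
      measurableSet_Iic hmono
  rw [integral_neg_mul_gg] at hle
  have : gg (-t) ≤ Real.exp (-t ^ 2 / 2) := by
    unfold gg
    rw [neg_sq]
    have h1 : (Real.sqrt (2 * Real.pi))⁻¹ ≤ 1 := by
      rw [inv_le_one_iff₀]
      right
      linarith [two_le_sqrt_two_pi]
    nlinarith [Real.exp_pos (-t ^ 2 / 2)]
  linarith

lemma Phi_zero : Phi 0 = 1 / 2 := by
  have h := Phi_neg 0
  rw [neg_zero] at h
  linarith

lemma gg_neg (t : ℝ) : gg (-t) = gg t := by unfold gg; rw [neg_sq]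

lemma sqrt_two_le : Real.sqrt 2 ≤ 3 / 2 := by
  calc Real.sqrt 2 ≤ Real.sqrt ((3/2)^2) := Real.sqrt_le_sqrt (by norm_num)
  _ = 3/2 := Real.sqrt_sq (by norm_num)

lemma exp_two_le : Real.exp 2 ≤ 8 := by
  have h2 : Real.exp 1 ^ 2 = Real.exp 2 := by rw [Real.exp_one_pow]; norm_num
  nlinarith [Real.exp_one_lt_d9, Real.exp_pos 1]

lemma exp_92_le : Real.exp ((9:ℝ)/2) ≤ 150 := by
  have h1 : Real.exp ((9:ℝ)/2) ≤ Real.exp 5 := Real.exp_le_exp.2 (by norm_num)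
  have h2 : Real.exp 1 ^ 5 = Real.exp 5 := by rw [Real.exp_one_pow]; norm_num
  have h3 := Real.exp_one_lt_d9
  have h4 : Real.exp 1 ^ 5 ≤ 2.7182818286 ^ 5 :=
    pow_le_pow_left₀ (Real.exp_pos 1).le h3.le 5
  have h5 : (2.7182818286:ℝ) ^ 5 ≤ 150 := by norm_num
  linarith

lemma log_ge {t : ℝ} (ht : 1 ≤ |t|) : t ^ 2 ≤ 2 * Real.log (1 / sigma2 t) := by
  have hσ := sigma2_pos t
  have h1 : sigma2 t ≤ Real.exp (-t ^ 2 / 2) := by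
    rcases le_or_gt 0 t with h | h
    · rw [abs_of_nonneg h] at ht
      have h2 : sigma2 t ≤ 1 - Phi t := by
        unfold sigma2
        nlinarith [Phi_pos t, Phi_le_one t]
      linarith [tail_le ht]
    · rw [abs_of_neg h] at ht
      have h3 := tail_le ht
      rw [Phi_neg] at h3
      have h2 : sigma2 t ≤ Phi t := by
        unfold sigma2
        nlinarith [Phi_pos t, Phi_le_one t]
      have h4 : (-t) ^ 2 = t ^ 2 := neg_sq t
      rw [h4] at h3
      linarith
  have h2 : Real.log (sigma2 t) ≤ -t ^ 2 / 2 := by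
    calc Real.log (sigma2 t) ≤ Real.log (Real.exp (-t ^ 2 / 2)) :=
      Real.log_le_log hσ h1
    _ = -t ^ 2 / 2 := Real.log_exp _
  rw [one_div, Real.log_inv]
  linarith

lemma abs_le_sqrt2L {t : ℝ} (ht : 1 ≤ |t|) :
    |t| ≤ Real.sqrt 2 * Real.sqrt (Real.log (1 / sigma2 t)) := by
  calc |t| = Real.sqrt (t ^ 2) := (Real.sqrt_sq_eq_abs t).symm
  _ ≤ Real.sqrt (2 * Real.log (1 / sigma2 t)) := Real.sqrt_le_sqrt (log_ge ht)
  _ = _ := Real.sqrt_mul (by norm_num) _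

lemma main_f_nonneg (t : ℝ) (ht : 0 ≤ t) :
    gg t ≤ 450 * sigma2 t * Real.sqrt (Real.log (1 / sigma2 t)) := by
  set L := Real.sqrt (Real.log (1 / sigma2 t)) with hLdef
  have hL := one_le_sqrt_log t
  have hσ := sigma2_pos t
  rcases le_or_gt t 2 with h2 | h2
  · -- bounded case
    have hp : 1 / 2 ≤ Phi t := by rw [← Phi_zero]; exact Phi_mono ht
    have hq : 1 - Phi 2 ≤ 1 - Phi t := by have := Phi_mono h2; linarith
    have h3 : gg 3 ≤ Phi 3 - Phi 2 := by
      have h := Phi_sub_ge (by norm_num : (2:ℝ) ≤ 3)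
        (fun x hx => gg_mono (by nlinarith [hx.1, hx.2] : x ^ 2 ≤ (3:ℝ) ^ 2))
      linarith
    have h4 : (1:ℝ) / 450 ≤ gg 3 := by
      unfold gg
      have ha : (3:ℝ)⁻¹ ≤ (Real.sqrt (2 * Real.pi))⁻¹ := by
        exact inv_anti₀ (by positivity) sqrt_two_pi_le
      have hb : (150:ℝ)⁻¹ ≤ Real.exp (-(3:ℝ) ^ 2 / 2) := by
        rw [show (-(3:ℝ) ^ 2 / 2) = -(9/2) by norm_num, Real.exp_neg]
        exact inv_anti₀ (Real.exp_pos _) exp_92_le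
      calc (1:ℝ)/450 = 3⁻¹ * 150⁻¹ := by norm_num
      _ ≤ _ := mul_le_mul ha hb (by norm_num) (by positivity)
    have h5 : (1:ℝ) / 450 ≤ 1 - Phi t := by
      have := Phi_le_one 3
      linarith
    have h6 : (1:ℝ) / 900 ≤ sigma2 t := by
      unfold sigma2
      nlinarith [Phi_le_one t]
    have h7 := gg_le_half t
    nlinarith [mul_le_mul_of_nonneg_left hL (by positivity : (0:ℝ) ≤ 450 * sigma2 t)]
  · -- tail case
    have ht1 : (1:ℝ) ≤ t := by linarith
    set u := 1 - Phi t with hu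
    have hu0 : 0 < u := by have := Phi_lt_one t; simp only [hu]; linarith
    have hp : 1 / 2 ≤ Phi t := by rw [← Phi_zero]; exact Phi_mono (by linarith)
    have hσu : u / 2 ≤ sigma2 t := by unfold sigma2; nlinarith [Phi_le_one t]
    have htpos : (0:ℝ) < t := by linarith
    have htL : t ≤ Real.sqrt 2 * L := by
      have h := abs_le_sqrt2L (t := t) (by rw [abs_of_pos htpos]; exact ht1)
      rwa [abs_of_pos htpos] at h
    -- gg t ≤ 8 t u
    have hstep : gg t ≤ 8 * t * u := by
      have hlt : t ≤ t + 1 / t := by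
        have : (0:ℝ) < 1 / t := by positivity
        linarith
      have hmin : ∀ x ∈ Set.Icc t (t + 1 / t), gg (t + 1 / t) ≤ gg x := by
        intro x hx
        apply gg_mono
        have h1 := hx.1
        have h2 := hx.2
        have h3 : (0:ℝ) < 1 / t := by positivity
        nlinarith
      have h1 := Phi_sub_ge hlt hmin
      have hPle := Phi_le_one (t + 1 / t)
      -- (1/t) * gg (t+1/t) ≤ u
      have h1' : (1 / t) * gg (t + 1 / t) ≤ u := by
        have : (t + 1 / t - t) = 1 / t := by ring
        rw [this] at h1
        linarith
      have h2 : gg t / 8 ≤ gg (t + 1 / t) := by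
        rw [gg_ratio (t + 1 / t) t]
        have hexp : (t ^ 2 - (t + 1 / t) ^ 2) / 2 = -1 - 1 / (2 * t ^ 2) := by
          field_simp
          ring
        rw [hexp]
        have he1 : (-2:ℝ) ≤ -1 - 1 / (2 * t ^ 2) := by
          have : (1:ℝ) / (2 * t ^ 2) ≤ 1 := by
            rw [div_le_one (by positivity)]
            nlinarith
          linarith
        have he2 : (1:ℝ) / 8 ≤ Real.exp (-1 - 1 / (2 * t ^ 2)) := by
          calc (1:ℝ)/8 = 8⁻¹ := by norm_num
          _ ≤ (Real.exp 2)⁻¹ := inv_anti₀ (Real.exp_pos _) exp_two_le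
          _ = Real.exp (-2) := by rw [Real.exp_neg]
          _ ≤ _ := Real.exp_le_exp.2 he1
        nlinarith [gg_pos t]
      have h3 : (1 / t) * (gg t / 8) ≤ u :=
        le_trans (mul_le_mul_of_nonneg_left h2 (by positivity)) h1'
      have hinv : t * (1 / t) = 1 := by field_simp
      have h4 := mul_le_mul_of_nonneg_left h3 (by positivity : (0:ℝ) ≤ 8 * t)
      have h5 : 8 * t * (1 / t * (gg t / 8)) = (t * (1 / t)) * gg t := by ring
      rw [h5, hinv, one_mul] at h4
      linarith
    have hcalc1 : gg t ≤ 8 * (Real.sqrt 2 * L) * (2 * sigma2 t) := by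
      have h8 : 8 * t ≤ 8 * (Real.sqrt 2 * L) := by linarith
      calc gg t ≤ 8 * t * u := hstep
      _ ≤ 8 * (Real.sqrt 2 * L) * (2 * sigma2 t) :=
        mul_le_mul h8 (by linarith) hu0.le (by positivity)
    calc gg t ≤ 8 * (Real.sqrt 2 * L) * (2 * sigma2 t) := hcalc1
    _ = 16 * Real.sqrt 2 * (sigma2 t * L) := by ring
    _ ≤ 450 * sigma2 t * L := by
        nlinarith [sqrt_two_le, mul_nonneg hσ.le (by linarith : (0:ℝ) ≤ L),
          Real.sqrt_nonneg 2]

lemma main_f (t : ℝ) : gg t ≤ 450 * sigma2 t * Real.sqrt (Real.log (1 / sigma2 t)) := by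
  rcases le_or_gt 0 t with h | h
  · exact main_f_nonneg t h
  · have h2 := main_f_nonneg (-t) (by linarith)
    rwa [gg_neg, sigma2_neg] at h2

lemma gg_interval {t ξ : ℝ} (hξ0 : 0 ≤ ξ)
    (hξ : ξ ≤ (1 / 2) / Real.sqrt (Real.log (1 / sigma2 t)))
    {s : ℝ} (hs : s ∈ Set.Icc (t - ξ) (t + ξ)) : gg s ≤ 3 * gg t := by
  set L := Real.sqrt (Real.log (1 / sigma2 t)) with hLdef
  have hL : 1 ≤ L := one_le_sqrt_log t
  have hLpos : (0:ℝ) < L := by linarith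
  have hξL : ξ * L ≤ 1 / 2 := by
    rw [← le_div_iff₀ hLpos]
    exact hξ
  have hξhalf : ξ ≤ 1 / 2 := by nlinarith
  have habs : |t| * ξ ≤ 3 / 4 := by
    rcases le_or_gt |t| 1 with h | h
    · nlinarith
    · have h2 := abs_le_sqrt2L (t := t) h.le
      calc |t| * ξ ≤ (Real.sqrt 2 * L) * ξ := by
            apply mul_le_mul_of_nonneg_right h2 hξ0
      _ = Real.sqrt 2 * (ξ * L) := by ring
      _ ≤ Real.sqrt 2 * (1 / 2) := by
            apply mul_le_mul_of_nonneg_left hξL (Real.sqrt_nonneg 2)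
      _ ≤ 3 / 4 := by nlinarith [sqrt_two_le, Real.sqrt_nonneg 2]
  have hexp : (t ^ 2 - s ^ 2) / 2 ≤ 1 := by
    have h1 : |s - t| ≤ ξ := abs_le.2 ⟨by linarith [hs.1], by linarith [hs.2]⟩
    have h2 : |s| ≤ |t| + ξ := by
      calc |s| = |t + (s - t)| := by ring_nf
      _ ≤ |t| + |s - t| := abs_add_le _ _
      _ ≤ |t| + ξ := by linarith
    have h3 : t ^ 2 - s ^ 2 ≤ |t - s| * |t + s| := by
      calc t ^ 2 - s ^ 2 ≤ |t ^ 2 - s ^ 2| := le_abs_self _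
      _ = |(t - s) * (t + s)| := by ring_nf
      _ = |t - s| * |t + s| := abs_mul _ _
    have h4 : |t - s| ≤ ξ := by rwa [abs_sub_comm] at h1
    have h5 : |t + s| ≤ 2 * |t| + ξ := by
      calc |t + s| ≤ |t| + |s| := abs_add_le _ _
      _ ≤ 2 * |t| + ξ := by linarith
    have h6 : |t - s| * |t + s| ≤ ξ * (2 * |t| + ξ) := by
      apply mul_le_mul h4 h5 (abs_nonneg _) hξ0
    nlinarith
  rw [gg_ratio s t]
  have h7 : Real.exp ((t ^ 2 - s ^ 2) / 2) ≤ Real.exp 1 := Real.exp_le_exp.2 hexp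
  have h8 : Real.exp 1 ≤ 3 := by linarith [Real.exp_one_lt_d9]
  nlinarith [gg_pos t, Real.exp_pos ((t ^ 2 - s ^ 2) / 2)]

/-- Lemma 2.4: regularity of the gaussian distribution function. -/
theorem stmt5 : ∃ c C : ℝ, 0 < c ∧ 0 < C ∧ ∀ t ξ : ℝ, 0 ≤ ξ →
    ξ ≤ c / Real.sqrt (Real.log (1 / sigma2 t)) →
    |Phi (t + ξ) - Phi t| ≤ C * ξ * sigma2 t * Real.sqrt (Real.log (1 / sigma2 t)) ∧
    |Phi (t - ξ) - Phi t| ≤ C * ξ * sigma2 t * Real.sqrt (Real.log (1 / sigma2 t)) := by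
  refine ⟨1 / 2, 2000, by norm_num, by norm_num, ?_⟩
  intro t ξ hξ0 hξ
  set L := Real.sqrt (Real.log (1 / sigma2 t)) with hLdef
  have hL1 : 1 ≤ L := one_le_sqrt_log t
  have hσ := sigma2_pos t
  have hmain : gg t ≤ 450 * sigma2 t * L := main_f t
  have hfinal : ξ * (3 * gg t) ≤ 2000 * ξ * sigma2 t * L := by
    have h1 : ξ * (3 * gg t) ≤ ξ * (3 * (450 * sigma2 t * L)) := by
      apply mul_le_mul_of_nonneg_left _ hξ0
      linarith [gg_pos t]
    have h2 : (0:ℝ) ≤ ξ * sigma2 t * L := by positivity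
    nlinarith
  constructor
  · have hmono : Phi t ≤ Phi (t + ξ) := Phi_mono (by linarith)
    rw [abs_of_nonneg (by linarith)]
    have h1 := Phi_sub_le (show t ≤ t + ξ by linarith)
      (fun x hx => gg_interval hξ0 hξ ⟨by linarith [hx.1], hx.2⟩)
    have h2 : (t + ξ - t) * (3 * gg t) = ξ * (3 * gg t) := by ring
    rw [h2] at h1
    linarith
  · have hmono : Phi (t - ξ) ≤ Phi t := Phi_mono (by linarith)
    rw [abs_sub_comm, abs_of_nonneg (by linarith)]
    have h1 := Phi_sub_le (show t - ξ ≤ t by linarith)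
      (fun x hx => gg_interval hξ0 hξ ⟨hx.1, by linarith [hx.2]⟩)
    have h2 : (t - (t - ξ)) * (3 * gg t) = ξ * (3 * gg t) := by ring
    rw [h2] at h1
    linarith
end
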